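/- Let C be a critical clique of a 3-leaf power G = (V,E) and S ⊆ V with C \ S nonempty. If C \ S is not a critical clique of the induced subgraph G[V \ S], then the connected component of G[V \ S] containing C \ S is a clique. -/

import Mathlib

open SimpleGraph

/-- `K` is a clique which is a module of `G`. -/
def IsCliqueModule {V : Type*} (G : SimpleGraph V) (K : Set V) : Prop :=
  G.IsClique K ∧ ∀ x ∈ K, ∀ y ∈ K, ∀ z ∉ K, (G.Adj x z ↔ G.Adj y z)

/-- A critical clique of `G`: a maximal clique module. -/
def IsCriticalClique {V : Type*} (G : SimpleGraph V) (K : Set V) : Prop :=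
  K.Nonempty ∧ IsCliqueModule G K ∧ ∀ K', IsCliqueModule G K' → K ⊆ K' → K' = K

/-- The bull: a triangle `0,1,2` with pendant vertices `3` (on `1`) and `4` (on `2`). -/
def bull : SimpleGraph (Fin 5) :=
  SimpleGraph.fromRel (fun a b => (a, b) ∈ ([(0,1),(0,2),(1,2),(1,3),(2,4)] : List (Fin 5 × Fin 5)))

/-- The dart: a diamond `0,1,2,3` (missing edge `(0,1)`) plus a pendant vertex `4`
adjacent to the degree-3 vertex `2`. -/
def dart : SimpleGraph (Fin 5) :=
  SimpleGraph.fromRel (fun a b => (a, b) ∈ ([(0,2),(0,3),(1,2),(1,3),(2,3),(2,4)] : List (Fin 5 × Fin 5)))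

/-- The gem: a path `0-1-2-3` plus a dominating vertex `4`. -/
def gem : SimpleGraph (Fin 5) :=
  SimpleGraph.fromRel (fun a b => (a, b) ∈ ([(0,1),(1,2),(2,3),(0,4),(1,4),(2,4),(3,4)] : List (Fin 5 × Fin 5)))

/-- A graph is a 3-leaf power iff it is {bull, dart, gem, chordless `C≥4`}-free. -/
def Is3LeafPower {V : Type*} (H : SimpleGraph V) : Prop :=
  IsEmpty (bull ↪g H) ∧ IsEmpty (dart ↪g H) ∧ IsEmpty (gem ↪g H) ∧
    ∀ n, 4 ≤ n → IsEmpty (SimpleGraph.cycleGraph n ↪g H)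

section Patterns

variable {V : Type*} {G : SimpleGraph V}

/-- bull: triangle `a b c`, pendant `d` on `b`, pendant `e` on `c`. -/
lemma no_bull (hfree : IsEmpty (bull ↪g G)) {a b c d e : V}
    (e1 : G.Adj a b) (e2 : G.Adj a c) (e3 : G.Adj b c) (e4 : G.Adj b d) (e5 : G.Adj c e)
    (n1 : ¬ G.Adj a d) (n2 : ¬ G.Adj a e) (n3 : ¬ G.Adj c d) (n4 : ¬ G.Adj b e)
    (n5 : ¬ G.Adj d e) : False := by
  have hne1 : a ≠ b := e1.ne
  have hne2 : a ≠ c := e2.ne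
  have hne3 : a ≠ d := by rintro rfl; exact n3 e2.symm
  have hne4 : a ≠ e := by rintro rfl; exact n4 e1.symm
  have hne5 : b ≠ c := e3.ne
  have hne6 : b ≠ d := e4.ne
  have hne7 : b ≠ e := by rintro rfl; exact n2 e1
  have hne8 : c ≠ d := by rintro rfl; exact n1 e2
  have hne9 : c ≠ e := e5.ne
  have hne10 : d ≠ e := by rintro rfl; exact n4 e4
  refine hfree.false ⟨⟨![a,b,c,d,e], ?_⟩, ?_⟩
  · intro i j hij
    fin_cases i <;> fin_cases j <;> simp_all
  · intro i j
    fin_cases i <;> fin_cases j <;>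
      simp (config := { decide := true }) only [Matrix.cons_val_zero, Matrix.cons_val_one,
        Matrix.head_cons, Matrix.cons_val_two, Matrix.tail_cons, Matrix.cons_val_three,
        Matrix.cons_val_four, bull, fromRel_adj, iff_true, iff_false] <;>
      first
        | exact G.irrefl
        | assumption
        | exact e1.symm | exact e2.symm | exact e3.symm | exact e4.symm | exact e5.symm
        | exact fun h => n1 h.symm | exact fun h => n2 h.symm | exact fun h => n3 h.symm
        | exact fun h => n4 h.symm | exact fun h => n5 h.symm

/-- dart: diamond on `a b c d` with missing edge `a-b` (so `c,d` have degree 3),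
plus pendant `p` adjacent to `c` only. -/
lemma no_dart (hfree : IsEmpty (dart ↪g G)) {a b c d p : V} (hne1 : a ≠ b)
    (e1 : G.Adj a c) (e2 : G.Adj a d) (e3 : G.Adj b c) (e4 : G.Adj b d) (e5 : G.Adj c d)
    (e6 : G.Adj c p)
    (n1 : ¬ G.Adj a b) (n2 : ¬ G.Adj a p) (n3 : ¬ G.Adj b p) (n4 : ¬ G.Adj d p) : False := by
  have hne2 : a ≠ c := e1.ne
  have hne3 : a ≠ d := e2.ne
  have hne4 : a ≠ p := by rintro rfl; exact n4 e2.symm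
  have hne5 : b ≠ c := e3.ne
  have hne6 : b ≠ d := e4.ne
  have hne7 : b ≠ p := by rintro rfl; exact n4 e4.symm
  have hne8 : c ≠ d := e5.ne
  have hne9 : c ≠ p := e6.ne
  have hne10 : d ≠ p := by rintro rfl; exact n2 e2
  refine hfree.false ⟨⟨![a,b,c,d,p], ?_⟩, ?_⟩
  · intro i j hij
    fin_cases i <;> fin_cases j <;> simp_all
  · intro i j
    fin_cases i <;> fin_cases j <;>
      simp (config := { decide := true }) only [Matrix.cons_val_zero, Matrix.cons_val_one,
        Matrix.head_cons, Matrix.cons_val_two, Matrix.tail_cons, Matrix.cons_val_three,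
        Matrix.cons_val_four, dart, fromRel_adj, iff_true, iff_false] <;>
      first
        | exact G.irrefl
        | assumption
        | exact e1.symm | exact e2.symm | exact e3.symm | exact e4.symm | exact e5.symm
        | exact e6.symm
        | exact fun h => n1 h.symm | exact fun h => n2 h.symm | exact fun h => n3 h.symm
        | exact fun h => n4 h.symm

/-- gem: induced path `a-b-c-d` plus dominating vertex `q`. -/
lemma no_gem (hfree : IsEmpty (gem ↪g G)) {a b c d q : V}
    (e1 : G.Adj a b) (e2 : G.Adj b c) (e3 : G.Adj c d)
    (e4 : G.Adj a q) (e5 : G.Adj b q) (e6 : G.Adj c q) (e7 : G.Adj d q)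
    (n1 : ¬ G.Adj a c) (n2 : ¬ G.Adj a d) (n3 : ¬ G.Adj b d) : False := by
  have hne1 : a ≠ b := e1.ne
  have hne2 : a ≠ c := by rintro rfl; exact n2 e3
  have hne3 : a ≠ d := by rintro rfl; exact n1 e3.symm
  have hne4 : a ≠ q := e4.ne
  have hne5 : b ≠ c := e2.ne
  have hne6 : b ≠ d := by rintro rfl; exact n2 e1
  have hne7 : b ≠ q := e5.ne
  have hne8 : c ≠ d := e3.ne
  have hne9 : c ≠ q := e6.ne
  have hne10 : d ≠ q := e7.ne
  refine hfree.false ⟨⟨![a,b,c,d,q], ?_⟩, ?_⟩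
  · intro i j hij
    fin_cases i <;> fin_cases j <;> simp_all
  · intro i j
    fin_cases i <;> fin_cases j <;>
      simp (config := { decide := true }) only [Matrix.cons_val_zero, Matrix.cons_val_one,
        Matrix.head_cons, Matrix.cons_val_two, Matrix.tail_cons, Matrix.cons_val_three,
        Matrix.cons_val_four, gem, fromRel_adj, iff_true, iff_false] <;>
      first
        | exact G.irrefl
        | assumption
        | exact e1.symm | exact e2.symm | exact e3.symm | exact e4.symm | exact e5.symm
        | exact e6.symm | exact e7.symm
        | exact fun h => n1 h.symm | exact fun h => n2 h.symm | exact fun h => n3 h.symm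

/-- induced 4-cycle `a-b-c-d-a`. -/
lemma no_c4 (hfree : IsEmpty (cycleGraph 4 ↪g G)) {a b c d : V}
    (hne2 : a ≠ c) (hne5 : b ≠ d)
    (e1 : G.Adj a b) (e2 : G.Adj b c) (e3 : G.Adj c d) (e4 : G.Adj d a)
    (n1 : ¬ G.Adj a c) (n2 : ¬ G.Adj b d) : False := by
  have hne1 : a ≠ b := e1.ne
  have hne3 : a ≠ d := e4.ne.symm
  have hne4 : b ≠ c := e2.ne
  have hne6 : c ≠ d := e3.ne
  refine hfree.false ⟨⟨![a,b,c,d], ?_⟩, ?_⟩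
  · intro i j hij
    fin_cases i <;> fin_cases j <;> simp_all
  · intro i j
    fin_cases i <;> fin_cases j <;>
      simp (config := { decide := true }) only [Matrix.cons_val_zero, Matrix.cons_val_one,
        Matrix.head_cons, Matrix.cons_val_two, Matrix.tail_cons, Matrix.cons_val_three,
        iff_true, iff_false] <;>
      first
        | exact G.irrefl
        | assumption
        | exact e1.symm | exact e2.symm | exact e3.symm | exact e4.symm
        | exact fun h => n1 h.symm | exact fun h => n2 h.symm

end Patterns
section Key

variable {V : Type*} {G : SimpleGraph V}

lemma exists_distinguisher {C : Set V} (hC : IsCriticalClique G C)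
    {t : V} (ht : t ∉ C) (htC : ∀ c ∈ C, G.Adj t c) {c₀ : V} (hc₀ : c₀ ∈ C) :
    ∃ z, z ∉ C ∧ z ≠ t ∧ ¬ (G.Adj z t ↔ G.Adj z c₀) := by
  by_contra h
  push_neg at h
  have hmodule : IsCliqueModule G (insert t C) := by
    constructor
    · intro a ha b hb hab
      rw [Set.mem_insert_iff] at ha hb
      rcases ha with rfl | ha <;> rcases hb with rfl | hb
      · exact absurd rfl hab
      · exact htC b hb
      · exact (htC a ha).symm
      · exact hC.2.1.1 ha hb hab
    · intro a ha b hb z hz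
      have hzC : z ∉ C := fun hh => hz (Set.mem_insert_of_mem _ hh)
      have hzt : z ≠ t := fun hh => hz (hh ▸ Set.mem_insert _ _)
      have hkey : ∀ e ∈ insert t C, (G.Adj e z ↔ G.Adj c₀ z) := by
        intro e he
        rw [Set.mem_insert_iff] at he
        rcases he with rfl | he
        · rw [G.adj_comm e z, G.adj_comm c₀ z]
          exact h z hzC hzt
        · exact hC.2.1.2 e he c₀ hc₀ z hzC
      exact (hkey a ha).trans (hkey b hb).symm
  have heq := hC.2.2 _ hmodule (Set.subset_insert t C)
  exact ht (heq ▸ Set.mem_insert t C)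

lemma key (hG : Is3LeafPower G) {C : Set V} (hC : IsCriticalClique G C)
    {u w v : V} (hu : u ∉ C) (huC : ∀ c ∈ C, G.Adj u c) (hw : w ∉ C) (huw : u ≠ w)
    (hadj : G.Adj u w) (hwC : ∀ c ∈ C, G.Adj w c) (hvu : v ≠ u) (hvw : v ≠ w)
    (h1 : G.Adj v w) (h2 : ¬ G.Adj v u) : False := by
  obtain ⟨hbull, hdart, hgem, hcyc⟩ := hG
  have hc4 := hcyc 4 (le_refl 4)
  obtain ⟨c₀, hc₀⟩ := hC.1
  have nsymm : ∀ {p q : V}, ¬ G.Adj p q → ¬ G.Adj q p := fun h hh => h hh.symm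
  have hvC : v ∉ C := fun h => h2 ((huC v h).symm)
  have huc : G.Adj u c₀ := huC c₀ hc₀
  have hwc : G.Adj w c₀ := hwC c₀ hc₀
  have hc0u : c₀ ≠ u := fun h => hu (h ▸ hc₀)
  have hc0w : c₀ ≠ w := fun h => hw (h ▸ hc₀)
  have hc0v : c₀ ≠ v := fun h => hvC (h ▸ hc₀)
  by_cases hA : G.Adj v c₀
  · -- Case A : v is adjacent to C
    obtain ⟨y, hyC, hyw, hyd⟩ := exists_distinguisher hC hw hwC hc₀
    have hyc0 : y ≠ c₀ := fun h => hyC (h ▸ hc₀)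
    by_cases h3 : G.Adj y w
    · have h4 : ¬ G.Adj y c₀ := fun h => hyd ⟨fun _ => h, fun _ => h3⟩
      by_cases h5 : G.Adj y u
      · by_cases h6 : G.Adj y v
        · -- C4 c₀ - u - y - v
          exact no_c4 hc4 hyc0.symm hvu.symm huc.symm h5.symm h6 hA (nsymm h4) (nsymm h2)
        · -- gem v - c₀ - u - y dominated by w
          exact no_gem hgem hA huc.symm h5.symm h1 hwc.symm hadj h3
            h2 (nsymm h6) (nsymm h4)
      · by_cases h6 : G.Adj y v
        · -- gem u - c₀ - v - y dominated by w
          exact no_gem hgem huc hA.symm h6.symm hadj hwc.symm h1 h3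
            (nsymm h2) (nsymm h5) (nsymm h4)
        · -- dart on {u,v,w,c₀} (missing u-v), pendant y on w
          exact no_dart hdart hvu.symm hadj huc h1 hA hwc h3.symm
            (nsymm h2) (nsymm h5) (nsymm h6) (nsymm h4)
    · have h4 : G.Adj y c₀ := by
        by_contra hy; exact hyd (iff_of_false h3 hy)
      by_cases h5 : G.Adj y u
      · by_cases h6 : G.Adj y v
        · -- C4 y - u - w - v
          exact no_c4 hc4 hyw hvu.symm h5 hadj h1.symm h6.symm h3 (nsymm h2)
        · -- gem y - u - w - v dominated by c₀
          exact no_gem hgem h5 hadj h1.symm h4 huc hwc hA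
            h3 h6 (nsymm h2)
      · by_cases h6 : G.Adj y v
        · -- gem y - v - w - u dominated by c₀
          exact no_gem hgem h6 h1 hadj.symm h4 hA hwc huc
            h3 h5 h2
        · -- dart on {u,v,c₀,w} (missing u-v), pendant y on c₀
          exact no_dart hdart hvu.symm huc hadj hA h1 hwc.symm h4.symm
            (nsymm h2) (nsymm h5) (nsymm h6) (nsymm h3)
  · -- Case B : v is not adjacent to C
    obtain ⟨x, hxC, hxu, hxd⟩ := exists_distinguisher hC hu huC hc₀
    have hxc0 : x ≠ c₀ := fun h => hxC (h ▸ hc₀)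
    by_cases h3 : G.Adj x u
    · have h4 : ¬ G.Adj x c₀ := fun h => hxd ⟨fun _ => h, fun _ => h3⟩
      have hxw : x ≠ w := fun h => h4 (h ▸ hwc)
      by_cases h5 : G.Adj x w
      · by_cases h6 : G.Adj x v
        · -- gem c₀ - u - x - v dominated by w
          exact no_gem hgem huc.symm h3.symm h6 hwc.symm hadj h5 h1
            (nsymm h4) (nsymm hA) (nsymm h2)
        · -- dart on {c₀,x,w,u} (missing c₀-x), pendant v on w
          exact no_dart hdart hxc0.symm hwc.symm huc.symm h5 h3 hadj.symm h1.symm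
            (nsymm h4) (nsymm hA) h6 (nsymm h2)
      · by_cases h6 : G.Adj x v
        · -- C4 u - x - v - w
          exact no_c4 hc4 hvu.symm hxw h3.symm h6 h1 hadj.symm (nsymm h2) h5
        · -- bull: triangle c₀ u w, pendant x on u, pendant v on w
          exact no_bull hbull huc.symm hwc.symm hadj h3.symm h1.symm
            (nsymm h4) (nsymm hA) (nsymm h5) (nsymm h2) h6
    · have h4 : G.Adj x c₀ := by
        by_contra hy; exact hxd (iff_of_false h3 hy)
      have hxw : x ≠ w := fun h => h3 (h ▸ hadj.symm)
      by_cases h5 : G.Adj x w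
      · by_cases h6 : G.Adj x v
        · -- gem v - x - c₀ - u dominated by w
          exact no_gem hgem h6.symm h4 huc.symm h1 h5 hwc.symm hadj
            hA h2 h3
        · -- dart on {x,u,w,c₀} (missing x-u), pendant v on w
          exact no_dart hdart hxu h5 h4 hadj huc hwc h1.symm
            h3 h6 (nsymm h2) (nsymm hA)
      · by_cases h6 : G.Adj x v
        · -- C4 x - v - w - c₀
          exact no_c4 hc4 hxw hc0v.symm h6 h1 hwc h4.symm h5 hA
        · -- bull: triangle u c₀ w, pendant x on c₀, pendant v on w
          exact no_bull hbull huc hadj hwc.symm h4.symm h1.symm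
            (nsymm h3) (nsymm h2) (nsymm h5) (nsymm hA) h6
end Key
theorem component_isClique_of_not_criticalClique {V : Type*} (G : SimpleGraph V)
    (hG : Is3LeafPower G) (C : Set V) (hC : IsCriticalClique G C) (S : Set V)
    (hne : (C \ S).Nonempty)
    (hnc : ¬ IsCriticalClique (G.induce Sᶜ) {x : ↥(Sᶜ) | ↑x ∈ C}) :
    ∀ x : ↥(Sᶜ), (↑x ∈ C) →
      (G.induce Sᶜ).IsClique ((G.induce Sᶜ).connectedComponentMk x).supp := by
  classical
  obtain ⟨c₁, hc₁C, hc₁S⟩ := hne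
  set G' := G.induce Sᶜ with hG'def
  set C' : Set ↥(Sᶜ) := {x : ↥(Sᶜ) | ↑x ∈ C} with hC'def
  let x₀ : ↥(Sᶜ) := ⟨c₁, hc₁S⟩
  have hx₀ : x₀ ∈ C' := hc₁C
  have adjco : ∀ {a b : ↥(Sᶜ)}, G'.Adj a b ↔ G.Adj ↑a ↑b := Iff.rfl
  have hC'cm : IsCliqueModule G' C' := by
    constructor
    · intro a ha b hb hab
      exact adjco.mpr (hC.2.1.1 ha hb (fun h => hab (Subtype.ext h)))
    · intro a ha b hb z hz
      exact hC.2.1.2 ↑a ha ↑b hb ↑z hz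
  obtain ⟨K', hK'cm, hsub, hKne⟩ :
      ∃ K', IsCliqueModule G' K' ∧ C' ⊆ K' ∧ K' ≠ C' := by
    by_contra h
    push_neg at h
    exact hnc ⟨⟨x₀, hx₀⟩, hC'cm, fun K' hK' hs => h K' hK' hs⟩
  obtain ⟨u, huK, huC'⟩ : ∃ u, u ∈ K' ∧ u ∉ C' := by
    by_contra h
    push_neg at h
    exact hKne (Set.Subset.antisymm h hsub)
  have huCv : (↑u : V) ∉ C := huC'
  have hx₀K : x₀ ∈ K' := hsub hx₀
  have hux₀ : u ≠ x₀ := fun h => huC' (h ▸ hx₀)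
  have hadjux₀ : G.Adj ↑u ↑x₀ := adjco.mp (hK'cm.1 huK hx₀K hux₀)
  have huCall : ∀ c ∈ C, G.Adj ↑u c := fun c hcC =>
    ((hC.2.1.2 ↑x₀ hx₀ c hcC ↑u huCv).mp hadjux₀.symm).symm
  have spread : ∀ (b : ↥(Sᶜ)), (↑b : V) ∉ C → G.Adj ↑x₀ ↑b → ∀ c ∈ C, G.Adj ↑b c := by
    intro b hbC hb c hcC
    exact ((hC.2.1.2 ↑x₀ hx₀ c hcC ↑b hbC).mp hb).symm
  have key2 : ∀ (a b : ↥(Sᶜ)), G.Adj ↑u ↑a → (∀ c ∈ C, G.Adj (↑a : V) c) →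
      (↑b : V) ≠ ↑u → (↑b : V) ≠ ↑a → (G.Adj ↑b ↑u ↔ G.Adj ↑b ↑a) := by
    intro a b hua haC hbu hba
    have haCout : (↑a : V) ∉ C := fun h => G.loopless.irrefl _ (haC _ h)
    constructor
    · intro h; by_contra hn
      exact key hG hC haCout haC huCv hua.ne' hua.symm huCall hba hbu h hn
    · intro h; by_contra hn
      exact key hG hC huCv huCall haCout hua.ne hua haC hbu hba h hn
  intro x hx
  have hxK : x ∈ K' := hsub hx
  let M : Set ↥(Sᶜ) := K' ∪ {m : ↥(Sᶜ) | G.Adj ↑u ↑m ∧ ∀ c ∈ C, G.Adj (↑m : V) c}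
  have hT : ∀ m ∈ M, m ∉ K' → G.Adj ↑u ↑m ∧ (∀ c ∈ C, G.Adj (↑m : V) c) := by
    intro m hm hmK
    rcases hm with h | h
    · exact absurd h hmK
    · exact h
  have hMclique : ∀ a ∈ M, ∀ b ∈ M, a ≠ b → G.Adj ↑a ↑b := by
    have mixed : ∀ a ∈ K', ∀ (b : ↥(Sᶜ)), G.Adj ↑u ↑b → a ≠ b → G.Adj ↑a ↑b := by
      intro a haK b hub hab
      by_cases hbK : b ∈ K'
      · exact adjco.mp (hK'cm.1 haK hbK hab)
      · exact adjco.mp ((hK'cm.2 u huK a haK b hbK).mp (adjco.mpr hub))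
    intro a ha b hb hab
    by_cases haK : a ∈ K'
    · by_cases hbK : b ∈ K'
      · exact adjco.mp (hK'cm.1 haK hbK hab)
      · obtain ⟨hub, hbC⟩ := hT b hb hbK
        exact mixed a haK b hub hab
    · obtain ⟨hua, haC⟩ := hT a ha haK
      by_cases hbK : b ∈ K'
      · exact (mixed b hbK a hua hab.symm).symm
      · obtain ⟨hub, hbC⟩ := hT b hb hbK
        have hba : (↑b : V) ≠ ↑a := fun h => hab (Subtype.ext h.symm)
        exact ((key2 a b hua haC hub.ne' hba).mp hub.symm).symm
  have hMclosed : ∀ a ∈ M, ∀ b : ↥(Sᶜ), G'.Adj a b → b ∈ M := by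
    intro a ha b hadjab
    by_cases hbK : b ∈ K'
    · exact Or.inl hbK
    by_cases hbC : (↑b : V) ∈ C
    · exact Or.inl (hsub hbC)
    rcases ha with haK | haT
    · have hub : G'.Adj u b := (hK'cm.2 a haK u huK b hbK).mp hadjab
      have hx₀b : G'.Adj x₀ b := (hK'cm.2 a haK x₀ hx₀K b hbK).mp hadjab
      exact Or.inr ⟨adjco.mp hub, spread b hbC (adjco.mp hx₀b)⟩
    · obtain ⟨hua, haC⟩ := haT
      have hbune : b ≠ u := fun h => hbK (h ▸ huK)
      have hbu : (↑b : V) ≠ ↑u := fun h => hbune (Subtype.ext h)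
      have hab' : G.Adj ↑a ↑b := adjco.mp hadjab
      have hbuadj : G.Adj ↑b ↑u := (key2 a b hua haC hbu hab'.ne').mpr hab'.symm
      have hx₀b : G'.Adj x₀ b := (hK'cm.2 u huK x₀ hx₀K b hbK).mp (adjco.mpr hbuadj.symm)
      exact Or.inr ⟨hbuadj.symm, spread b hbC (adjco.mp hx₀b)⟩
  have hwalk : ∀ {s t : ↥(Sᶜ)} (p : G'.Walk s t), s ∈ M → t ∈ M := by
    intro s t p
    induction p with
    | nil => exact id
    | cons h q ih => exact fun hs => ih (hMclosed _ hs _ h)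
  intro a ha b hb hab
  rw [SimpleGraph.ConnectedComponent.mem_supp_iff, SimpleGraph.ConnectedComponent.eq] at ha hb
  have haM : a ∈ M := by obtain ⟨p⟩ := ha.symm; exact hwalk p (Or.inl hxK)
  have hbM : b ∈ M := by obtain ⟨p⟩ := hb.symm; exact hwalk p (Or.inl hxK)
  exact adjco.mpr (hMclique a haM b hbM hab)
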